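/- Let G₃ = ⟨g₁, g₂, g₃ ∣ g₂g₁ = g₁^{-1}g₂, g₃g₁ = g₁^{-1}g₃, g₃g₂ = g₂g₃⟩. A map ψ : G₃ → G₃ is an automorphism if and only if there exist a, e, f, h, i ∈ ℤ and ε ∈ {1, -1} with e·i − f·h = ±1, e ≡ i (mod 2), f ≡ h (mod 2), and e + f odd, such that ψ(g₁) = g₁^{ε}, ψ(g₂) = g₁^{a} g₂^{e} g₃^{f}, and ψ(g₃) = g₁^{a} g₂^{h} g₃^{i}. -/

import Mathlib

/-- The relators `g₂g₁g₂⁻¹g₁`, `g₃g₁g₃⁻¹g₁`, `g₃g₂g₃⁻¹g₂⁻¹` presenting the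
group `⟨g₁, g₂, g₃ ∣ g₂g₁ = g₁⁻¹g₂, g₃g₁ = g₁⁻¹g₃, g₃g₂ = g₂g₃⟩`. -/
def polyZRelsB0 : Set (FreeGroup (Fin 3)) :=
  {FreeGroup.of 1 * FreeGroup.of 0 * (FreeGroup.of 1)⁻¹ * FreeGroup.of 0,
   FreeGroup.of 2 * FreeGroup.of 0 * (FreeGroup.of 2)⁻¹ * FreeGroup.of 0,
   FreeGroup.of 2 * FreeGroup.of 1 * (FreeGroup.of 2)⁻¹ * (FreeGroup.of 1)⁻¹}

namespace PolyZB0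

/-- sign (-1)^n for an integer n -/
def sgn (n : ℤ) : ℤ := if Even n then 1 else -1

lemma sgn_zero : sgn 0 = 1 := by simp [sgn]

lemma sgn_add (m n : ℤ) : sgn (m + n) = sgn m * sgn n := by
  rcases Int.even_or_odd m with hm | hm <;> rcases Int.even_or_odd n with hn | hn <;>
    simp [sgn, Int.even_add, hm, hn, Int.not_even_iff_odd, Int.not_even_iff_odd.mpr]

lemma sgn_mul_self (n : ℤ) : sgn n * sgn n = 1 := by
  rcases Int.even_or_odd n with h | h <;>
    simp [sgn, h, Int.not_even_iff_odd.mpr]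

lemma sgn_neg (n : ℤ) : sgn (-n) = sgn n := by simp [sgn]

lemma sgn_of_even {n : ℤ} (h : Even n) : sgn n = 1 := by simp [sgn, h]
lemma sgn_of_odd {n : ℤ} (h : Odd n) : sgn n = -1 := by
  simp [sgn, Int.not_even_iff_odd.mpr h]

lemma sgn_eq_or (n : ℤ) : sgn n = 1 ∨ sgn n = -1 := by unfold sgn; split <;> simp

/-- parity: 0 if even, 1 if odd -/
def par (n : ℤ) : ℤ := if Even n then 0 else 1

lemma par_zero : par 0 = 0 := by simp [par]

/-- The model group: `ℤ ⋊ ℤ²` with `(b,c)` acting on `a` by `(-1)^(b+c)`. -/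
@[ext] structure M where
  x : ℤ
  y : ℤ
  z : ℤ

instance : Mul M := ⟨fun a b => ⟨a.x + sgn (a.y + a.z) * b.x, a.y + b.y, a.z + b.z⟩⟩
instance : One M := ⟨⟨0, 0, 0⟩⟩
instance : Inv M := ⟨fun a => ⟨-(sgn (a.y + a.z) * a.x), -a.y, -a.z⟩⟩

lemma mul_def (a b : M) : a * b = ⟨a.x + sgn (a.y + a.z) * b.x, a.y + b.y, a.z + b.z⟩ := rfl
lemma inv_def (a : M) : a⁻¹ = ⟨-(sgn (a.y + a.z) * a.x), -a.y, -a.z⟩ := rfl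
lemma one_def : (1 : M) = ⟨0, 0, 0⟩ := rfl

instance : Group M where
  mul_assoc a b c := by
    ext <;> simp only [mul_def, sgn_add] <;> ring
  one_mul a := by
    have h0 : (0:ℤ) + 0 = 0 := rfl
    ext <;> simp only [mul_def, one_def, h0, sgn_zero] <;> ring
  mul_one a := by
    ext <;> simp only [mul_def, one_def] <;> ring
  inv_mul_cancel a := by
    have h2 : -a.y + -a.z = -(a.y + a.z) := by ring
    ext <;> simp only [mul_def, inv_def, one_def, h2, sgn_neg] <;>
      [skip; ring; ring]
    show -(sgn (a.y + a.z) * a.x) + sgn (a.y + a.z) * a.x = 0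
    ring



lemma par_add_one (n : ℤ) : par (n + 1) = 1 - par n := by
  rcases Int.even_or_odd n with h | h <;>
    simp [par, h, Int.even_add_one, Int.not_even_iff_odd, Int.not_even_iff_odd.mpr]

lemma par_sub_one (n : ℤ) : par (n - 1) = 1 - par n := by
  have := par_add_one (n - 1); simp at this; omega

lemma sgn_add_one (n : ℤ) : sgn (n + 1) = -sgn n := by
  rcases Int.even_or_odd n with h | h <;>
    simp [sgn, h, Int.even_add_one, Int.not_even_iff_odd, Int.not_even_iff_odd.mpr]

lemma sgn_sub_one (n : ℤ) : sgn (n - 1) = -sgn n := by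
  have := sgn_add_one (n - 1); simp at this; omega

lemma sgn_mul_of_odd {n : ℤ} (k : ℤ) (h : Odd n) : sgn (k * n) = sgn k := by
  rcases Int.even_or_odd k with hk | hk
  · rw [sgn_of_even (hk.mul_right n), sgn_of_even hk]
  · rw [sgn_of_odd (hk.mul h), sgn_of_odd hk]

lemma par_of_even {n : ℤ} (h : Even n) : par n = 0 := by simp [par, h]
lemma par_of_odd {n : ℤ} (h : Odd n) : par n = 1 := by
  simp [par, Int.not_even_iff_odd.mpr h]
lemma par_neg (n : ℤ) : par (-n) = par n := by simp [par]

/-- zpow of an element with even `y + z`. -/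
lemma zpow_of_even (w : M) (h : Even (w.y + w.z)) (n : ℤ) :
    w ^ n = ⟨n * w.x, n * w.y, n * w.z⟩ := by
  induction n using Int.induction_on with
  | zero => ext <;> simp [one_def]
  | succ k ih =>
      rw [zpow_add_one, ih, mul_def,
        show (k:ℤ) * w.y + (k:ℤ) * w.z = (k:ℤ) * (w.y + w.z) from by ring,
        sgn_of_even (h.mul_left _)]
      simp only [M.mk.injEq]; refine ⟨by ring, by ring, by ring⟩
  | pred k ih =>
      rw [zpow_sub_one, ih, mul_def, inv_def,
        show -(k:ℤ) * w.y + -(k:ℤ) * w.z = (-(k:ℤ)) * (w.y + w.z) from by ring,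
        sgn_of_even (h.mul_left _), sgn_of_even h]
      simp only [M.mk.injEq]; refine ⟨by ring, by ring, by ring⟩

/-- zpow of an element with odd `y + z`. -/
lemma zpow_of_odd (w : M) (h : Odd (w.y + w.z)) (n : ℤ) :
    w ^ n = ⟨par n * w.x, n * w.y, n * w.z⟩ := by
  induction n using Int.induction_on with
  | zero => ext <;> simp [one_def, par_zero]
  | succ k ih =>
      rw [zpow_add_one, ih, mul_def,
        show (k:ℤ) * w.y + (k:ℤ) * w.z = (k:ℤ) * (w.y + w.z) from by ring,
        sgn_mul_of_odd _ h, par_add_one]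
      simp only [M.mk.injEq]
      refine ⟨?_, by ring, by ring⟩
      rcases Int.even_or_odd (k:ℤ) with he | he
      · rw [sgn_of_even he, par_of_even he]; ring
      · rw [sgn_of_odd he, par_of_odd he]; ring
  | pred k ih =>
      rw [zpow_sub_one, ih, mul_def, inv_def,
        show -(k:ℤ) * w.y + -(k:ℤ) * w.z = (-(k:ℤ)) * (w.y + w.z) from by ring,
        sgn_mul_of_odd _ h, sgn_neg, sgn_of_odd h, par_sub_one, par_neg]
      simp only [M.mk.injEq]
      refine ⟨?_, by ring, by ring⟩
      rcases Int.even_or_odd (k:ℤ) with he | he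
      · rw [sgn_of_even he, par_of_even he]; ring
      · rw [sgn_of_odd he, par_of_odd he]; ring

def m1 : M := ⟨1,0,0⟩
def m2 : M := ⟨0,1,0⟩
def m3 : M := ⟨0,0,1⟩

lemma m1_zpow (n : ℤ) : m1 ^ n = ⟨n, 0, 0⟩ := by
  rw [zpow_of_even m1 (by norm_num [m1]) n]; simp [m1]

lemma m2_zpow (n : ℤ) : m2 ^ n = ⟨0, n, 0⟩ := by
  rw [zpow_of_odd m2 (by norm_num [m2]) n]; simp [m2]

lemma m3_zpow (n : ℤ) : m3 ^ n = ⟨0, 0, n⟩ := by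
  rw [zpow_of_odd m3 (by norm_num [m3]) n]; simp [m3]

lemma nf_eq (x y z : ℤ) : m1 ^ x * m2 ^ y * m3 ^ z = ⟨x, y, z⟩ := by
  rw [m1_zpow, m2_zpow, m3_zpow]
  ext <;> simp [mul_def] <;> ring

lemma decomp (m : M) : m = m1 ^ m.x * m2 ^ m.y * m3 ^ m.z := by
  rw [nf_eq]

lemma map_decomp (χ : M →* M) (m : M) :
    χ m = χ m1 ^ m.x * χ m2 ^ m.y * χ m3 ^ m.z := by
  conv_lhs => rw [decomp m]
  rw [map_mul, map_mul, map_zpow, map_zpow, map_zpow]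

lemma Mrel1 : m2 * m1 * m2⁻¹ * m1 = 1 := by
  ext <;> simp [mul_def, inv_def, one_def, m1, m2, sgn] <;> decide

lemma Mrel2 : m3 * m1 * m3⁻¹ * m1 = 1 := by
  ext <;> simp [mul_def, inv_def, one_def, m1, m3, sgn] <;> decide

lemma Mrel3 : m3 * m2 * m3⁻¹ * m2⁻¹ = 1 := by
  ext <;> simp [mul_def, inv_def, one_def, m2, m3, sgn] <;> decide

lemma parity_aux {e f h i P Q : ℤ} (hP : P % 2 = e % 2 * (i % 2) % 2)
    (hQ : Q % 2 = f % 2 * (h % 2) % 2) (h1 : (e + f) % 2 = 1)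
    (h2 : (h + i) % 2 = 1) (h3 : P - Q = 1 ∨ P - Q = -1) :
    e % 2 = i % 2 ∧ f % 2 = h % 2 := by
  rcases Int.emod_two_eq e with he | he <;> rcases Int.emod_two_eq f with hf | hf <;>
    rcases Int.emod_two_eq h with hh | hh <;> rcases Int.emod_two_eq i with hi | hi <;>
    rw [he, hi] at hP <;> rw [hf, hh] at hQ <;> norm_num at hP hQ <;> omega

lemma eq_pm_one {d u : ℤ} (h : u * d = 1) : d = 1 ∨ d = -1 := by
  rcases Int.eq_one_or_neg_one_of_mul_eq_one' h with ⟨_, h⟩ | ⟨_, h⟩ <;> [left; right] <;>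
    exact h

lemma chi_apply (χ : M →* M) {p a e f a2 h i : ℤ}
    (h1 : χ m1 = ⟨p,0,0⟩) (h2 : χ m2 = ⟨a,e,f⟩) (h3 : χ m3 = ⟨a2,h,i⟩)
    (hef : Odd (e + f)) (hhi : Odd (h + i)) (u : M) :
    χ u = ⟨u.x * p + par u.y * a + sgn u.y * (par u.z * a2),
           u.y * e + u.z * h, u.y * f + u.z * i⟩ := by
  rw [map_decomp χ u, h1, h2, h3,
    zpow_of_even ⟨p,0,0⟩ (by norm_num) u.x,
    zpow_of_odd ⟨a,e,f⟩ hef u.y, zpow_of_odd ⟨a2,h,i⟩ hhi u.z]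
  simp only [mul_def]
  have harg : u.x * (0:ℤ) + u.x * 0 = 0 := by ring
  have harg2 : u.x * (0:ℤ) + u.y * e + (u.x * 0 + u.y * f) = u.y * (e + f) := by ring
  ext <;> simp only [harg, harg2, sgn_zero, sgn_mul_of_odd u.y hef] <;> ring

lemma keyM (χ : M →* M) :
    Function.Bijective χ ↔
      ∃ a e f h i ε : ℤ, (ε = 1 ∨ ε = -1) ∧
        (e * i - f * h = 1 ∨ e * i - f * h = -1) ∧
        e % 2 = i % 2 ∧ f % 2 = h % 2 ∧ Odd (e + f) ∧
        χ m1 = ⟨ε,0,0⟩ ∧ χ m2 = ⟨a,e,f⟩ ∧ χ m3 = ⟨a,h,i⟩ := by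
  constructor
  · intro hbij
    rcases h1 : χ m1 with ⟨p,q,r⟩
    rcases h2 : χ m2 with ⟨a,e,f⟩
    rcases h3 : χ m3 with ⟨a2,h,i⟩
    -- relation 1
    have hA := congrArg χ Mrel1
    simp only [map_mul, map_inv, map_one, h1, h2] at hA
    simp only [mul_def, inv_def, one_def, M.mk.injEq] at hA
    obtain ⟨hAx, hAy, hAz⟩ := hA
    have hq : q = 0 := by omega
    have hr : r = 0 := by omega
    subst hq hr
    simp only [add_zero, add_neg_cancel, sgn_zero, one_mul] at hAx
    have hsp1 : sgn (e + f) * p = -p := by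
      linear_combination hAx + a * sgn_mul_self (e + f)
    -- relation 2
    have hB := congrArg χ Mrel2
    simp only [map_mul, map_inv, map_one, h1, h3] at hB
    simp only [mul_def, inv_def, one_def, M.mk.injEq] at hB
    obtain ⟨hBx, hBy, hBz⟩ := hB
    simp only [add_zero, add_neg_cancel, sgn_zero, one_mul] at hBx
    have hsp2 : sgn (h + i) * p = -p := by
      linear_combination hBx + a2 * sgn_mul_self (h + i)
    -- p ≠ 0
    have hp0 : p ≠ 0 := by
      intro hp
      have : χ m1 = χ 1 := by rw [h1, hp, map_one]; rfl
      have := hbij.1 this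
      rw [m1, one_def, M.mk.injEq] at this
      exact one_ne_zero this.1
    have hef : Odd (e + f) := by
      rcases Int.even_or_odd (e + f) with hev | hod
      · rw [sgn_of_even hev, one_mul] at hsp1; omega
      · exact hod
    have hhi : Odd (h + i) := by
      rcases Int.even_or_odd (h + i) with hev | hod
      · rw [sgn_of_even hev, one_mul] at hsp2; omega
      · exact hod
    -- relation 3 : a2 = a
    have hC := congrArg χ Mrel3
    simp only [map_mul, map_inv, map_one, h2, h3] at hC
    simp only [mul_def, inv_def, one_def, M.mk.injEq] at hC
    obtain ⟨hCx, -, -⟩ := hC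
    rw [show h + e + (i + f) = (h+i) + (e+f) by ring,
        show h + e + -h + (i + f + -i) = e + f by ring,
        sgn_add (h+i) (e+f), sgn_of_odd hef, sgn_of_odd hhi] at hCx
    have ha2 : a2 = a := by linarith
    subst ha2
    -- surjectivity consequences
    obtain ⟨u2, hu2⟩ := hbij.2 m2
    obtain ⟨u3, hu3⟩ := hbij.2 m3
    obtain ⟨u1, hu1⟩ := hbij.2 m1
    rw [chi_apply χ h1 h2 h3 hef hhi] at hu2 hu3 hu1
    rw [m2, M.mk.injEq] at hu2
    rw [m3, M.mk.injEq] at hu3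
    rw [m1, M.mk.injEq] at hu1
    obtain ⟨-, hu2y, hu2z⟩ := hu2
    obtain ⟨-, hu3y, hu3z⟩ := hu3
    obtain ⟨hu1x, hu1y, hu1z⟩ := hu1
    -- determinant is ±1
    have hdet : (u2.y * u3.z - u2.z * u3.y) * (e * i - f * h) = 1 := by
      linear_combination (u2.y*e + u2.z*h) * hu3z + hu2y - (u3.y*e + u3.z*h) * hu2z
    have hD := eq_pm_one hdet
    -- p = ±1
    have hy0 : u1.y * (e * i - f * h) = 0 := by linear_combination i * hu1y - h * hu1z
    have hz0 : u1.z * (e * i - f * h) = 0 := by linear_combination e * hu1z - f * hu1y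
    have hu1y0 : u1.y = 0 := by rcases hD with hd | hd <;> rw [hd] at hy0 <;> omega
    have hu1z0 : u1.z = 0 := by rcases hD with hd | hd <;> rw [hd] at hz0 <;> omega
    rw [hu1y0, hu1z0, par_zero] at hu1x
    have hpx : u1.x * p = 1 := by linear_combination hu1x
    have hp := eq_pm_one hpx
    -- parity
    obtain ⟨hpar1, hpar2⟩ := parity_aux (Int.mul_emod e i 2) (Int.mul_emod f h 2)
      (Int.odd_iff.mp hef) (Int.odd_iff.mp hhi) hD
    exact ⟨a2, e, f, h, i, p, hp, hD, hpar1, hpar2, hef, rfl, rfl, rfl⟩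
  · rintro ⟨a, e, f, h, i, ε, hε, hD, hei, hfh, hef, H1, H2, H3⟩
    have hhi : Odd (h + i) := by
      rw [Int.odd_iff] at hef ⊢; omega
    have hε2 : ε * ε = 1 := by rcases hε with h' | h' <;> rw [h'] <;> norm_num
    constructor
    · rintro ⟨ux, uy, uz⟩ ⟨vx, vy, vz⟩ huv
      rw [chi_apply χ H1 H2 H3 hef hhi, chi_apply χ H1 H2 H3 hef hhi] at huv
      dsimp only at huv
      rw [M.mk.injEq] at huv
      obtain ⟨hx', hy', hz'⟩ := huv
      have hyy : (uy - vy) * (e * i - f * h) = 0 := by linear_combination i * hy' - h * hz'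
      have hzz : (uz - vz) * (e * i - f * h) = 0 := by linear_combination e * hz' - f * hy'
      have hy0 : uy = vy := by rcases hD with hd | hd <;> rw [hd] at hyy <;> omega
      have hz0 : uz = vz := by rcases hD with hd | hd <;> rw [hd] at hzz <;> omega
      subst hy0 hz0
      have hxx : ux * ε = vx * ε := by linarith
      have hx0 : ux = vx := by rcases hε with h' | h' <;> rw [h'] at hxx <;> omega
      rw [hx0]
    · rintro ⟨vx, vy, vz⟩
      rcases hD with hd | hd
      · refine ⟨⟨ε * (vx - par (i*vy - h*vz) * a
            - sgn (i*vy - h*vz) * (par (e*vz - f*vy) * a)),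
            i*vy - h*vz, e*vz - f*vy⟩, ?_⟩
        rw [chi_apply χ H1 H2 H3 hef hhi]
        dsimp only
        rw [M.mk.injEq]
        refine ⟨by linear_combination (vx - par (i*vy - h*vz) * a
            - sgn (i*vy - h*vz) * (par (e*vz - f*vy) * a)) * hε2,
          by linear_combination vy * hd, by linear_combination vz * hd⟩
      · refine ⟨⟨ε * (vx - par (-(i*vy - h*vz)) * a
            - sgn (-(i*vy - h*vz)) * (par (-(e*vz - f*vy)) * a)),
            -(i*vy - h*vz), -(e*vz - f*vy)⟩, ?_⟩
        rw [chi_apply χ H1 H2 H3 hef hhi]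
        dsimp only
        rw [M.mk.injEq]
        refine ⟨by linear_combination (vx - par (-(i*vy - h*vz)) * a
            - sgn (-(i*vy - h*vz)) * (par (-(e*vz - f*vy)) * a)) * hε2,
          by linear_combination (-vy) * hd, by linear_combination (-vz) * hd⟩

abbrev G : Type := PresentedGroup polyZRelsB0
def g1 : G := PresentedGroup.of 0
def g2 : G := PresentedGroup.of 1
def g3 : G := PresentedGroup.of 2

lemma mk_rel_one {r : FreeGroup (Fin 3)} (hr : r ∈ polyZRelsB0) :
    PresentedGroup.mk polyZRelsB0 r = 1 :=
  (QuotientGroup.eq_one_iff r).2 (Subgroup.subset_normalClosure hr)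

lemma rel1 : g2 * g1 * g2⁻¹ * g1 = 1 := by
  have := mk_rel_one (r := FreeGroup.of 1 * FreeGroup.of 0 * (FreeGroup.of 1)⁻¹ *
    FreeGroup.of 0) (by left; rfl)
  simp only [map_mul, map_inv] at this; exact this

lemma rel2 : g3 * g1 * g3⁻¹ * g1 = 1 := by
  have := mk_rel_one (r := FreeGroup.of 2 * FreeGroup.of 0 * (FreeGroup.of 2)⁻¹ *
    FreeGroup.of 0) (by right; left; rfl)
  simp only [map_mul, map_inv] at this; exact this

lemma rel3 : g3 * g2 * g3⁻¹ * g2⁻¹ = 1 := by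
  have := mk_rel_one (r := FreeGroup.of 2 * FreeGroup.of 1 * (FreeGroup.of 2)⁻¹ *
    (FreeGroup.of 1)⁻¹) (by right; right; rfl)
  simp only [map_mul, map_inv] at this; exact this

section Conj
variable {Gr : Type*} [Group Gr] {c a : Gr}

lemma conj_zpow_comm (hc : c * a * c⁻¹ * a = 1) (y : ℤ) :
    ∀ x : ℤ, c ^ y * a ^ x = a ^ (sgn y * x) * c ^ y := by
  have h' : c * a * c⁻¹ = a⁻¹ := eq_inv_of_mul_eq_one_left hc
  have hstep : ∀ x : ℤ, c * a ^ x = a ^ (-x) * c := by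
    intro x
    have hx : c * a ^ x * c⁻¹ = a ^ (-x) := by
      rw [← conj_zpow, h', inv_zpow, ← zpow_neg]
    rw [← hx]; group
  have hstep' : ∀ x : ℤ, c⁻¹ * a ^ x = a ^ (-x) * c⁻¹ := by
    intro x
    rw [inv_mul_eq_iff_eq_mul, ← mul_assoc, hstep (-x), neg_neg]
    group
  induction y using Int.induction_on with
  | zero => intro x; rw [sgn_zero, one_mul]; group
  | succ k ih =>
      intro x
      calc c ^ ((k:ℤ)+1) * a ^ x = c ^ (k:ℤ) * (c * a ^ x) := by
            rw [zpow_add_one]; group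
        _ = c ^ (k:ℤ) * (a ^ (-x) * c) := by rw [hstep]
        _ = (c ^ (k:ℤ) * a ^ (-x)) * c := by group
        _ = (a ^ (sgn (k:ℤ) * -x) * c ^ (k:ℤ)) * c := by rw [ih]
        _ = a ^ (sgn ((k:ℤ)+1) * x) * c ^ ((k:ℤ)+1) := by
            rw [sgn_add_one, show -sgn (k:ℤ) * x = sgn (k:ℤ) * -x by ring,
              zpow_add_one]; group
  | pred k ih =>
      intro x
      calc c ^ (-(k:ℤ)-1) * a ^ x = c ^ (-(k:ℤ)) * (c⁻¹ * a ^ x) := by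
            rw [zpow_sub_one]; group
        _ = c ^ (-(k:ℤ)) * (a ^ (-x) * c⁻¹) := by rw [hstep']
        _ = (c ^ (-(k:ℤ)) * a ^ (-x)) * c⁻¹ := by group
        _ = (a ^ (sgn (-(k:ℤ)) * -x) * c ^ (-(k:ℤ))) * c⁻¹ := by rw [ih]
        _ = a ^ (sgn (-(k:ℤ)-1) * x) * c ^ (-(k:ℤ)-1) := by
            rw [sgn_sub_one, sgn_neg, show -sgn (k:ℤ) * x = sgn (-(k:ℤ)) * -x by
              rw [sgn_neg]; ring, zpow_sub_one]
            rw [sgn_neg]; group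
end Conj

lemma comm21 (y x : ℤ) : g2 ^ y * g1 ^ x = g1 ^ (sgn y * x) * g2 ^ y :=
  conj_zpow_comm rel1 y x

lemma comm31 (y x : ℤ) : g3 ^ y * g1 ^ x = g1 ^ (sgn y * x) * g3 ^ y :=
  conj_zpow_comm rel2 y x

lemma comm32 (z y : ℤ) : g3 ^ z * g2 ^ y = g2 ^ y * g3 ^ z := by
  have h2 : g2 * g3 = g3 * g2 := by
    have h := rel3
    rw [mul_inv_eq_one (b := g2)] at h
    calc g2 * g3 = (g3 * g2 * g3⁻¹) * g3 := by rw [h]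
      _ = g3 * g2 := by group
  exact ((Commute.zpow_zpow h2 y z).symm : _)

lemma nf_mul (x y z x' y' z' : ℤ) :
    (g1^x * g2^y * g3^z) * (g1^x' * g2^y' * g3^z') =
      g1^(x + sgn (y+z) * x') * g2^(y+y') * g3^(z+z') := by
  calc (g1^x * g2^y * g3^z) * (g1^x' * g2^y' * g3^z')
      = g1^x * g2^y * (g3^z * g1^x') * g2^y' * g3^z' := by group
    _ = g1^x * g2^y * (g1^(sgn z * x') * g3^z) * g2^y' * g3^z' := by rw [comm31]
    _ = g1^x * (g2^y * g1^(sgn z * x')) * (g3^z * g2^y') * g3^z' := by group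
    _ = g1^x * (g1^(sgn y * (sgn z * x')) * g2^y) * (g2^y' * g3^z) * g3^z' := by
        rw [comm21, comm32]
    _ = g1^(x + sgn (y+z) * x') * g2^(y+y') * g3^(z+z') := by
        rw [show x + sgn (y+z) * x' = x + sgn y * (sgn z * x') from by
          rw [sgn_add]; ring, zpow_add g1, zpow_add g2, zpow_add g3]
        group

def nfSet : Subgroup G where
  carrier := {g | ∃ x y z : ℤ, g = g1^x * g2^y * g3^z}
  one_mem' := ⟨0, 0, 0, by simp⟩
  mul_mem' := by
    rintro p q ⟨x, y, z, rfl⟩ ⟨x', y', z', rfl⟩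
    exact ⟨x + sgn (y+z) * x', y+y', z+z', (nf_mul x y z x' y' z')⟩
  inv_mem' := by
    rintro p ⟨x, y, z, rfl⟩
    refine ⟨-(sgn (y+z) * x), -y, -z, ?_⟩
    have h1 : (g1^x * g2^y * g3^z) *
        (g1^(-(sgn (y+z) * x)) * g2^(-y) * g3^(-z)) = 1 := by
      rw [nf_mul, show x + sgn (y+z) * -(sgn (y+z) * x) = x * (1 - sgn (y+z) * sgn (y+z))
        from by ring, sgn_mul_self]
      simp
    exact (inv_eq_of_mul_eq_one_right h1)

lemma nf_surj (g : G) : ∃ x y z : ℤ, g = g1^x * g2^y * g3^z := by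
  refine PresentedGroup.generated_by _ nfSet ?_ g
  intro j
  match j with
  | 0 => exact ⟨1, 0, 0, by simp [g1]⟩
  | 1 => exact ⟨0, 1, 0, by simp [g2]⟩
  | 2 => exact ⟨0, 0, 1, by simp [g3]⟩

def fM : Fin 3 → M := ![m1, m2, m3]

lemma relsat : ∀ r ∈ polyZRelsB0, FreeGroup.lift fM r = 1 := by
  rintro r (rfl | rfl | rfl)
  · simpa [fM, map_mul, map_inv] using Mrel1
  · simpa [fM, map_mul, map_inv] using Mrel2
  · simpa [fM, map_mul, map_inv] using Mrel3

def φ : G →* M := PresentedGroup.toGroup relsat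

lemma φ_g1 : φ g1 = m1 := by simp [φ, g1, fM]
lemma φ_g2 : φ g2 = m2 := by simp [φ, g2, fM]
lemma φ_g3 : φ g3 = m3 := by simp [φ, g3, fM]

lemma φ_nf (x y z : ℤ) : φ (g1^x * g2^y * g3^z) = ⟨x, y, z⟩ := by
  rw [map_mul, map_mul, map_zpow, map_zpow, map_zpow, φ_g1, φ_g2, φ_g3, nf_eq]

lemma φ_bij : Function.Bijective φ := by
  constructor
  · intro g g' hg
    obtain ⟨x, y, z, rfl⟩ := nf_surj g
    obtain ⟨x', y', z', rfl⟩ := nf_surj g'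
    rw [φ_nf, φ_nf, M.mk.injEq] at hg
    rw [hg.1, hg.2.1, hg.2.2]
  · intro m
    exact ⟨g1^m.x * g2^m.y * g3^m.z, by rw [φ_nf]⟩

noncomputable def Φ : G ≃* M := MulEquiv.ofBijective φ φ_bij

lemma Φ_apply (g : G) : Φ g = φ g := rfl

lemma Φ_symm_g1 : Φ.symm m1 = g1 := by
  rw [← φ_g1, ← Φ_apply, MulEquiv.symm_apply_apply]
lemma Φ_symm_g2 : Φ.symm m2 = g2 := by
  rw [← φ_g2, ← Φ_apply, MulEquiv.symm_apply_apply]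
lemma Φ_symm_g3 : Φ.symm m3 = g3 := by
  rw [← φ_g3, ← Φ_apply, MulEquiv.symm_apply_apply]

end PolyZB0

open PolyZB0

/-- In `G₃ = ⟨g₁, g₂, g₃ ∣ g₂g₁ = g₁⁻¹g₂, g₃g₁ = g₁⁻¹g₃, g₃g₂ = g₂g₃⟩`, a
group homomorphism `ψ : G₃ →* G₃` is an automorphism (i.e. bijective) if and
only if there exist `a, e, f, h, i ∈ ℤ` and `ε ∈ {1, -1}` with
`e·i − f·h = ±1`, `e ≡ i (mod 2)`, `f ≡ h (mod 2)` and `e + f` odd such that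
`ψ g₁ = g₁^ε`, `ψ g₂ = g₁^a g₂^e g₃^f`, and `ψ g₃ = g₁^a g₂^h g₃^i`. -/
theorem polyZ_b0_aut_characterization
    (ψ : PresentedGroup polyZRelsB0 →* PresentedGroup polyZRelsB0) :
    letI G₃ := PresentedGroup polyZRelsB0
    letI g₁ : G₃ := PresentedGroup.of 0
    letI g₂ : G₃ := PresentedGroup.of 1
    letI g₃ : G₃ := PresentedGroup.of 2
    Function.Bijective ψ ↔
      ∃ (a e f h i ε : ℤ), (ε = 1 ∨ ε = -1) ∧
        (e * i - f * h = 1 ∨ e * i - f * h = -1) ∧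
        e % 2 = i % 2 ∧ f % 2 = h % 2 ∧ Odd (e + f) ∧
        ψ g₁ = g₁ ^ ε ∧ ψ g₂ = g₁ ^ a * g₂ ^ e * g₃ ^ f ∧
        ψ g₃ = g₁ ^ a * g₂ ^ h * g₃ ^ i := by
  show Function.Bijective ψ ↔
      ∃ (a e f h i ε : ℤ), (ε = 1 ∨ ε = -1) ∧
        (e * i - f * h = 1 ∨ e * i - f * h = -1) ∧
        e % 2 = i % 2 ∧ f % 2 = h % 2 ∧ Odd (e + f) ∧
        ψ g1 = g1 ^ ε ∧ ψ g2 = g1 ^ a * g2 ^ e * g3 ^ f ∧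
        ψ g3 = g1 ^ a * g2 ^ h * g3 ^ i
  set χ : M →* M := φ.comp (ψ.comp Φ.symm.toMonoidHom) with hχ
  have hχ_apply : ∀ m : M, χ m = φ (ψ (Φ.symm m)) := fun m => rfl
  have hχΦ : ∀ g : G, χ (Φ g) = φ (ψ g) := by
    intro g; rw [hχ_apply, MulEquiv.symm_apply_apply]
  have hbij_iff : Function.Bijective ψ ↔ Function.Bijective χ := by
    constructor
    · intro hψ
      have : ⇑χ = ⇑φ ∘ ⇑ψ ∘ ⇑Φ.symm := by
        funext m; rw [hχ_apply]; rfl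
      rw [this]
      exact φ_bij.comp (hψ.comp Φ.symm.bijective)
    · intro hχb
      have : ⇑ψ = ⇑Φ.symm ∘ ⇑χ ∘ ⇑Φ := by
        funext g
        rw [Function.comp_apply, Function.comp_apply, hχΦ, ← Φ_apply,
          MulEquiv.symm_apply_apply]
      rw [this]
      exact Φ.symm.bijective.comp (hχb.comp Φ.bijective)
  have key1 : ∀ ε : ℤ, (χ m1 = ⟨ε,0,0⟩ ↔ ψ g1 = g1 ^ ε) := by
    intro ε
    rw [show χ m1 = φ (ψ g1) from by rw [hχ_apply, Φ_symm_g1],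
      show (⟨ε,0,0⟩ : M) = φ (g1 ^ ε) from by rw [map_zpow, φ_g1, m1_zpow]]
    exact φ_bij.1.eq_iff
  have key2 : ∀ a e f : ℤ, (χ m2 = ⟨a,e,f⟩ ↔ ψ g2 = g1^a * g2^e * g3^f) := by
    intro a e f
    rw [show χ m2 = φ (ψ g2) from by rw [hχ_apply, Φ_symm_g2],
      show (⟨a,e,f⟩ : M) = φ (g1^a * g2^e * g3^f) from (φ_nf a e f).symm]
    exact φ_bij.1.eq_iff
  have key3 : ∀ a h i : ℤ, (χ m3 = ⟨a,h,i⟩ ↔ ψ g3 = g1^a * g2^h * g3^i) := by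
    intro a h i
    rw [show χ m3 = φ (ψ g3) from by rw [hχ_apply, Φ_symm_g3],
      show (⟨a,h,i⟩ : M) = φ (g1^a * g2^h * g3^i) from (φ_nf a h i).symm]
    exact φ_bij.1.eq_iff
  rw [hbij_iff, keyM χ]
  simp only [key1, key2, key3]
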